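/- For all real numbers A > 0 and B > 0, the integral ∫₀^∞ exp(-A x² - B/x²) dx equals (1/2)·√(π/A)·exp(-2√(AB)). -/

import Mathlib

open MeasureTheory Real Set

lemma glasser_deriv (a b x : ℝ) (hx : x ≠ 0) :
    HasDerivAt (fun x => a * x - b / x) (a + b / x ^ 2) x := by
  have h := ((hasDerivAt_id x).const_mul a).sub ((hasDerivAt_inv hx).const_mul b)
  simp only [mul_one] at h
  simp only [div_eq_mul_inv]
  exact h.congr_deriv (by ring)

lemma glasser_img_univ (a b : ℝ) (ha : 0 < a) (hb : 0 < b) :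
    (fun x => a * x - b / x) '' Ioi 0 = univ := by
  ext y
  simp only [mem_image, mem_Ioi, mem_univ, iff_true]
  set s := Real.sqrt (y ^ 2 + 4 * a * b) with hs
  have hsnn : 0 ≤ s := Real.sqrt_nonneg _
  have hs2 : s ^ 2 = y ^ 2 + 4 * a * b := Real.sq_sqrt (by nlinarith)
  have hys : 0 < y + s := by nlinarith [sq_nonneg (s + y)]
  refine ⟨(y + s) / (2 * a), by positivity, ?_⟩
  have h2a : (2 * a) ≠ 0 := by positivity
  field_simp
  nlinarith [hs2]

lemma glasser_strictmono (a b : ℝ) (ha : 0 < a) (hb : 0 < b) :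
    StrictMonoOn (fun x => a * x - b / x) (Ioi 0) := by
  intro x hx y hy hxy
  simp only [mem_Ioi] at hx hy
  have h1 : a * x < a * y := by nlinarith
  have h2 : b / y < b / x := div_lt_div_of_pos_left hb hx hxy
  dsimp only
  linarith

lemma inv_img (a b : ℝ) (ha : 0 < a) (hb : 0 < b) :
    (fun x => b / (a * x)) '' Ioi 0 = Ioi 0 := by
  ext y
  simp only [mem_image, mem_Ioi]
  constructor
  · rintro ⟨x, hx, rfl⟩; positivity
  · intro hy
    refine ⟨b / (a * y), by positivity, ?_⟩
    field_simp

lemma glasser_key (a b : ℝ) (ha : 0 < a) (hb : 0 < b) :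
    ∫ x in Ioi (0:ℝ), Real.exp (-(a * x - b / x) ^ 2) = Real.sqrt π / (2 * a) := by
  set g : ℝ → ℝ := fun u => Real.exp (-u ^ 2) with hgdef
  set J := ∫ x in Ioi (0:ℝ), Real.exp (-(a * x - b / x) ^ 2) with hJ
  -- derivative of h x = b/(a x)
  have hder : ∀ x ∈ Ioi (0:ℝ), HasDerivWithinAt (fun x => b / (a * x))
      (-(b / (a * x ^ 2))) (Ioi 0) x := by
    intro x hx
    have hx0 : x ≠ 0 := ne_of_gt hx
    have h := ((hasDerivAt_inv hx0).const_mul (b / a))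
    have : HasDerivAt (fun x => b / (a * x)) (b / a * (-(x ^ 2)⁻¹)) x := by
      have e : (fun x => b / (a * x)) = fun y => b / a * y⁻¹ := by ext y; ring
      rw [e]; exact h
    exact this.hasDerivWithinAt.congr_deriv (by ring)
  have hinj : InjOn (fun x => b / (a * x)) (Ioi 0) := by
    intro x hx y hy hxy
    simp only [mem_Ioi] at hx hy
    have hx0 : x ≠ 0 := ne_of_gt hx
    have hy0 : y ≠ 0 := ne_of_gt hy
    rw [div_eq_div_iff (by positivity) (by positivity)] at hxy
    have h1 : a * y = a * x := mul_left_cancel₀ (ne_of_gt hb) hxy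
    exact (mul_left_cancel₀ (ne_of_gt ha) h1).symm
  -- symmetry step
  have hsymm : J = ∫ x in Ioi (0:ℝ), (b / (a * x ^ 2)) *
      Real.exp (-(a * x - b / x) ^ 2) := by
    have := integral_image_eq_integral_abs_deriv_smul measurableSet_Ioi hder hinj
      (fun x => Real.exp (-(a * x - b / x) ^ 2))
    rw [inv_img a b ha hb] at this
    rw [hJ, this]
    refine setIntegral_congr_fun measurableSet_Ioi (fun x hx => ?_)
    simp only [mem_Ioi] at hx
    have hx0 : x ≠ 0 := ne_of_gt hx
    have habs : |(-(b / (a * x ^ 2)))| = b / (a * x ^ 2) := by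
      rw [abs_neg, abs_of_pos (by positivity)]
    rw [habs, smul_eq_mul]
    congr 2
    have h1 : a * (b / (a * x)) = b / x := by field_simp
    have h2 : b / (b / (a * x)) = a * x := by field_simp
    rw [h1, h2]
    ring
  -- integrability of the plain integrand
  have hint1 : IntegrableOn (fun x => Real.exp (-(a * x - b / x) ^ 2)) (Ioi 0) := by
    have hmaj : IntegrableOn (fun x => Real.exp (2 * a * b) *
        Real.exp (-a ^ 2 * x ^ 2)) (Ioi 0) := by
      exact ((integrable_exp_neg_mul_sq (by positivity : (0:ℝ) < a ^ 2)).const_mul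
        _).integrableOn
    refine Integrable.mono' hmaj ?_ ?_
    · apply Measurable.aestronglyMeasurable
      fun_prop
    · filter_upwards [ae_restrict_mem measurableSet_Ioi] with x hx
      simp only [mem_Ioi] at hx
      have hx0 : x ≠ 0 := ne_of_gt hx
      rw [Real.norm_eq_abs, abs_of_pos (Real.exp_pos _), ← Real.exp_add]
      apply Real.exp_le_exp.2
      have : (a * x - b / x) ^ 2 = a ^ 2 * x ^ 2 - 2 * a * b + (b / x) ^ 2 := by
        field_simp; ring
      nlinarith [sq_nonneg (b / x)]
  -- integrability of the weighted integrand
  have hint2 : IntegrableOn (fun x => (b / (a * x ^ 2)) *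
      Real.exp (-(a * x - b / x) ^ 2)) (Ioi 0) := by
    have := (integrableOn_image_iff_integrableOn_abs_deriv_smul measurableSet_Ioi hder hinj
      (fun x => Real.exp (-(a * x - b / x) ^ 2)))
    rw [inv_img a b ha hb] at this
    have h2 := this.1 hint1
    refine h2.congr_fun (fun x hx => ?_) measurableSet_Ioi
    simp only [mem_Ioi] at hx
    have hx0 : x ≠ 0 := ne_of_gt hx
    have habs : |(-(b / (a * x ^ 2)))| = b / (a * x ^ 2) := by
      rw [abs_neg, abs_of_pos (by positivity)]
    dsimp only
    rw [habs, smul_eq_mul]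
    congr 2
    have h1 : a * (b / (a * x)) = b / x := by field_simp
    have h2 : b / (b / (a * x)) = a * x := by field_simp
    rw [h1, h2]
    ring
  -- main change of variables u = a x - b / x
  have hmain : Real.sqrt π = ∫ x in Ioi (0:ℝ),
      (a + b / x ^ 2) * Real.exp (-(a * x - b / x) ^ 2) := by
    have hgd : ∀ x ∈ Ioi (0:ℝ), HasDerivWithinAt (fun x => a * x - b / x)
        (a + b / x ^ 2) (Ioi 0) x := fun x hx =>
      (glasser_deriv a b x (ne_of_gt hx)).hasDerivWithinAt
    have hinj2 : InjOn (fun x => a * x - b / x) (Ioi 0) :=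
      (glasser_strictmono a b ha hb).injOn
    have := integral_image_eq_integral_abs_deriv_smul measurableSet_Ioi hgd hinj2 g
    rw [glasser_img_univ a b ha hb] at this
    have hgauss : ∫ x in (univ : Set ℝ), g x = Real.sqrt π := by
      rw [setIntegral_univ, hgdef]
      have := integral_gaussian 1
      simpa using this
    rw [← hgauss, this]
    refine setIntegral_congr_fun measurableSet_Ioi (fun x hx => ?_)
    simp only [mem_Ioi] at hx
    rw [abs_of_pos (by positivity), smul_eq_mul]
  -- combine
  have hsplit : ∫ x in Ioi (0:ℝ), (a + b / x ^ 2) * Real.exp (-(a * x - b / x) ^ 2)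
      = a * J + a * J := by
    have heq : ∀ x, (a + b / x ^ 2) * Real.exp (-(a * x - b / x) ^ 2)
        = a * Real.exp (-(a * x - b / x) ^ 2)
          + a * ((b / (a * x ^ 2)) * Real.exp (-(a * x - b / x) ^ 2)) := by
      intro x
      rcases eq_or_ne x 0 with rfl | hx0
      · simp
      · field_simp
    rw [show (fun x => (a + b / x ^ 2) * Real.exp (-(a * x - b / x) ^ 2))
        = fun x => a * Real.exp (-(a * x - b / x) ^ 2)
          + a * ((b / (a * x ^ 2)) * Real.exp (-(a * x - b / x) ^ 2)) from funext heq]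
    rw [integral_add (hint1.const_mul a) (hint2.const_mul a), integral_const_mul,
      integral_const_mul, ← hJ, ← hsymm]
  rw [hsplit] at hmain
  have ha2 : (2 * a) ≠ 0 := by positivity
  field_simp
  linarith [hmain]

theorem laplace_integral (A B : ℝ) (hA : 0 < A) (hB : 0 < B) :
    ∫ x in Set.Ioi (0:ℝ), Real.exp (-A * x ^ 2 - B / x ^ 2)
      = (1 / 2) * Real.sqrt (Real.pi / A) * Real.exp (-2 * Real.sqrt (A * B)) := by
  set a := Real.sqrt A with hadef
  set b := Real.sqrt B with hbdef
  have ha : 0 < a := Real.sqrt_pos.2 hA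
  have hb : 0 < b := Real.sqrt_pos.2 hB
  have ha2 : a ^ 2 = A := Real.sq_sqrt hA.le
  have hb2 : b ^ 2 = B := Real.sq_sqrt hB.le
  have hab : Real.sqrt (A * B) = a * b := Real.sqrt_mul hA.le B
  have hcongr : ∫ x in Set.Ioi (0:ℝ), Real.exp (-A * x ^ 2 - B / x ^ 2)
      = ∫ x in Set.Ioi (0:ℝ), Real.exp (-2 * (a*b)) * Real.exp (-(a * x - b / x) ^ 2) := by
    refine setIntegral_congr_fun measurableSet_Ioi (fun x hx => ?_)
    simp only [mem_Ioi] at hx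
    have hx0 : x ≠ 0 := ne_of_gt hx
    rw [← Real.exp_add]
    congr 1
    rw [← ha2, ← hb2]
    field_simp
    ring
  rw [hcongr, integral_const_mul, glasser_key a b ha hb, hab]
  have hsq : Real.sqrt (π / A) = Real.sqrt π / a := Real.sqrt_div pi_pos.le A
  rw [hsq]
  ring
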